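/- Let 0 < ρ < 1 and 0 < ρ_z < 1 with ρ_z² ≤ ρ (i.e. |z| ≥ √(r_e³/r_i)). Then δ · Σ_{n=1}^∞ ρ_z^{2n}/(n(δ² + n² ρ^{2n})) → 0 as δ → 0⁺. -/

import Mathlib

open Filter Set

theorem no_blowup_neg_k0_case (ρ ρz : ℝ) (hρ0 : 0 < ρ) (hρ1 : ρ < 1)
    (hρz0 : 0 < ρz) (hρz1 : ρz < 1) (h : ρz ^ 2 ≤ ρ) :
    Tendsto (fun δ : ℝ =>
        δ * ∑' n : ℕ, ρz ^ (2 * n) / ((n : ℝ) * (δ ^ 2 + (n : ℝ) ^ 2 * ρ ^ (2 * n))))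
      (nhdsWithin 0 (Ioi 0)) (nhds 0) := by
  have key : Tendsto (fun δ : ℝ =>
      ∑' n : ℕ, δ * (ρz ^ (2 * n) / ((n : ℝ) * (δ ^ 2 + (n : ℝ) ^ 2 * ρ ^ (2 * n)))))
      (nhdsWithin 0 (Ioi 0)) (nhds (∑' _ : ℕ, (0 : ℝ))) := by
    apply tendsto_tsum_of_dominated_convergence
      (bound := fun n : ℕ => 1 / (2 * (n : ℝ) ^ 2))
    · have := (Real.summable_one_div_nat_pow (p := 2)).2 (by norm_num)
      have := this.mul_left (1 / 2)
      convert this using 2 with n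
      · rfl
      · ring
    · intro n
      rcases Nat.eq_zero_or_pos n with rfl | hn
      · simpa using tendsto_const_nhds
      · have hne : ((n : ℝ) * ((0:ℝ) ^ 2 + (n : ℝ) ^ 2 * ρ ^ (2 * n))) ≠ 0 := by
          have : (0:ℝ) < (n : ℝ) := by exact_mod_cast hn
          positivity
        have hcont : Tendsto (fun δ : ℝ =>
            δ * (ρz ^ (2 * n) / ((n : ℝ) * (δ ^ 2 + (n : ℝ) ^ 2 * ρ ^ (2 * n)))))
            (nhds 0) (nhds (0 * (ρz ^ (2 * n) / ((n : ℝ) * ((0:ℝ) ^ 2 + (n : ℝ) ^ 2 * ρ ^ (2 * n)))))) := by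
          apply Tendsto.mul tendsto_id
          exact (tendsto_const_nhds.div
            (tendsto_const_nhds.mul (((continuous_pow 2).tendsto 0).add tendsto_const_nhds))
            hne)
        rw [zero_mul] at hcont
        exact hcont.mono_left nhdsWithin_le_nhds
    · filter_upwards [self_mem_nhdsWithin] with δ (hδ : 0 < δ)
      intro n
      rcases Nat.eq_zero_or_pos n with rfl | hn
      · simp
      have hn' : (0:ℝ) < (n : ℝ) := by exact_mod_cast hn
      have hρn : (0:ℝ) < ρ ^ n := pow_pos hρ0 n
      have hden : (0:ℝ) < (n : ℝ) * (δ ^ 2 + (n : ℝ) ^ 2 * ρ ^ (2 * n)) := by positivity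
      have hterm : (0:ℝ) ≤ δ * (ρz ^ (2 * n) / ((n : ℝ) * (δ ^ 2 + (n : ℝ) ^ 2 * ρ ^ (2 * n)))) := by
        positivity
      rw [Real.norm_eq_abs, abs_of_nonneg hterm]
      have h1 : ρz ^ (2 * n) ≤ ρ ^ n := by
        rw [pow_mul]
        exact pow_le_pow_left₀ (sq_nonneg ρz) h n
      have h2 : ρ ^ (2 * n) = (ρ ^ n) ^ 2 := pow_mul' ρ 2 n
      rw [mul_div_assoc']
      rw [div_le_div_iff₀ hden (by positivity), h2]
      have hsq : (0:ℝ) ≤ (δ - (n : ℝ) * ρ ^ n) ^ 2 := sq_nonneg _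
      nlinarith [mul_nonneg hn'.le hsq,
        mul_le_mul_of_nonneg_left h1 (by positivity : (0:ℝ) ≤ 2 * (n:ℝ)^2 * δ)]
  rw [tsum_zero] at key
  refine key.congr fun δ => ?_
  rw [tsum_mul_left]
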